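/- For every fixed integer n ≥ 1, the limit as θ → 0+ of (ψ_n^0(θ) - 1/2)/θ equals -H_{n-1}/2, where H_m = ∑_{i=1}^{m} 1/i is the m-th harmonic number (H_0 = 0). -/

import Mathlib

open Finset Filter

/-- ψ_n^k(θ) = (∏_{i=1}^{k}(θ+i-1) · ∏_{j=1}^{n-k}(θ+j-1)) / ∏_{l=1}^{n}(2θ+l-1). -/
noncomputable def psi (θ : ℝ) (n k : ℕ) : ℝ :=
  ((∏ i ∈ Finset.range k, (θ + i)) * ∏ j ∈ Finset.range (n - k), (θ + j)) /
    ∏ l ∈ Finset.range n, (2 * θ + l)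
theorem psi_zero_low_mutation (n : ℕ) (hn : 1 ≤ n) :
    Filter.Tendsto (fun θ : ℝ => (psi θ n 0 - 1 / 2) / θ) (nhdsWithin 0 (Set.Ioi 0))
      (nhds (-(∑ i ∈ Finset.range (n - 1), (1 : ℝ) / (i + 1)) / 2)) := by
  obtain ⟨m, rfl⟩ : ∃ m, n = m + 1 := ⟨n - 1, (Nat.succ_pred_eq_of_pos hn).symm⟩
  simp only [Nat.add_sub_cancel]
  set g : ℝ → ℝ := fun θ => (1/2) * ∏ i ∈ Finset.range m,
      (θ + ((i : ℝ) + 1)) / (2*θ + ((i : ℝ) + 1)) with hg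
  have h1 : ∀ i ∈ Finset.range m,
      HasDerivAt (fun θ : ℝ => (θ + ((i : ℝ) + 1)) / (2*θ + ((i : ℝ) + 1)))
        (-(1/((i:ℝ)+1))) 0 := by
    intro i _
    have hnum : HasDerivAt (fun θ : ℝ => θ + ((i:ℝ)+1)) 1 0 := (hasDerivAt_id 0).add_const _
    have hden : HasDerivAt (fun θ : ℝ => 2*θ + ((i:ℝ)+1)) 2 0 := by
      simpa using (((hasDerivAt_id (0:ℝ)).const_mul 2).add_const ((i:ℝ)+1))
    have hne : (2*(0:ℝ) + ((i:ℝ)+1)) ≠ 0 := by positivity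
    have h := hnum.fun_div hden hne
    refine h.congr_deriv ?_
    have h0 : ((i:ℝ)+1) ≠ 0 := by positivity
    field_simp
    ring
  have hp := HasDerivAt.fun_finsetProd h1
  have hval : ∀ j : ℕ, ((0:ℝ) + ((j : ℝ) + 1)) / (2*(0:ℝ) + ((j : ℝ) + 1)) = 1 := by
    intro j
    have h0 : ((j:ℝ)+1) ≠ 0 := by positivity
    field_simp
    ring
  have hsum : (∑ i ∈ Finset.range m,
      (∏ j ∈ (Finset.range m).erase i,
        ((0:ℝ) + ((j : ℝ) + 1)) / (2*(0:ℝ) + ((j : ℝ) + 1))) • (-(1/((i:ℝ)+1))))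
      = -(∑ i ∈ Finset.range m, (1:ℝ)/(i+1)) := by
    rw [← Finset.sum_neg_distrib]
    refine Finset.sum_congr rfl fun i _ => ?_
    rw [Finset.prod_congr rfl (fun j _ => hval j), Finset.prod_const_one]
    simp
  rw [hsum] at hp
  have hderiv : HasDerivAt g (-(∑ i ∈ Finset.range m, (1:ℝ)/(i+1)) / 2) 0 := by
    have := hp.const_mul (1/2 : ℝ)
    refine this.congr_deriv ?_
    ring
  have hslope := hasDerivAt_iff_tendsto_slope.mp hderiv
  have hmono : nhdsWithin (0:ℝ) (Set.Ioi 0) ≤ nhdsWithin 0 {(0:ℝ)}ᶜ :=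
    nhdsWithin_mono _ (fun x hx => ne_of_gt hx)
  refine (hslope.mono_left hmono).congr' ?_
  have hg0 : g 0 = 1/2 := by
    rw [hg]
    simp only
    rw [Finset.prod_congr rfl (fun j _ => hval j), Finset.prod_const_one, mul_one]
  filter_upwards [self_mem_nhdsWithin] with θ (hθ : 0 < θ)
  have hθ0 : θ ≠ 0 := ne_of_gt hθ
  have hpsi : psi θ (m+1) 0 = g θ := by
    unfold psi
    rw [Nat.sub_zero, Finset.prod_range_zero, one_mul,
      Finset.prod_range_succ' (fun j : ℕ => θ + (j:ℝ)),
      Finset.prod_range_succ' (fun l : ℕ => 2*θ + (l:ℝ))]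
    push_cast
    have hDne : (∏ i ∈ Finset.range m, (2*θ + ((i:ℝ)+1))) ≠ 0 := by
      refine Finset.prod_ne_zero_iff.mpr fun i _ => ?_
      positivity
    rw [hg]
    simp only
    rw [Finset.prod_div_distrib]
    field_simp
    ring
  rw [slope_def_field, hg0, hpsi]
  ring
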